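/- arXiv:1001.2094 — 3 statements merged into one kernel-verified Lean document; each statement's English description precedes it below -/
import Mathlib

section
/- Let H be a Hilbert space which is compactly embedded in L₂(μ) (its unit ball B_H is convex and L₂-compact), and let Y ∈ L₂. For r ≥ 1 let f_r* be the (unique) minimizer of f ↦ E(f(X) − Y)² over (r−1)B_H. Then the map r ↦ E(f_r*(X) − Y)² is continuous on [1, ∞). -/
open Pointwise

theorem minimal_loss_continuous {E : Type*} [NormedAddCommGroup E]
    [InnerProductSpace ℝ E]
    (K : Set E) (hKc : Convex ℝ K) (hK : IsCompact K) (h0 : (0 : E) ∈ K)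
    (Y : E) (fstar : ℝ → E)
    (hmem : ∀ r, 1 ≤ r → fstar r ∈ (r - 1) • K)
    (hmin : ∀ r, 1 ≤ r → ∀ g ∈ (r - 1) • K, ‖fstar r - Y‖ ≤ ‖g - Y‖) :
    ContinuousOn (fun r => ‖fstar r - Y‖ ^ 2) (Set.Ici (1 : ℝ)) := by
  obtain ⟨C, hC⟩ := hK.isBounded.exists_norm_le
  set M : ℝ := max C 0 with hMdef
  have hM0 : 0 ≤ M := le_max_right _ _
  have hMb : ∀ k ∈ K, ‖k‖ ≤ M := fun k hk => (hC k hk).trans (le_max_left _ _)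
  have key : ∀ r ∈ Set.Ici (1:ℝ), ∀ s ∈ Set.Ici (1:ℝ),
      ‖fstar s - Y‖ ≤ ‖fstar r - Y‖ + M * |s - r| := by
    intro r hr s hs
    obtain ⟨k, hk, hkr⟩ := hmem r hr
    have hmemk : (s - 1) • k ∈ (s - 1) • K := Set.smul_mem_smul_set hk
    have h1 : ‖fstar s - Y‖ ≤ ‖(s - 1) • k - Y‖ := hmin s hs _ hmemk
    simp only at hkr
    have h2 : (s - 1) • k - Y = (fstar r - Y) + (s - r) • k := by
      rw [← hkr]; module
    calc ‖fstar s - Y‖ ≤ ‖(s - 1) • k - Y‖ := h1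
      _ = ‖(fstar r - Y) + (s - r) • k‖ := by rw [h2]
      _ ≤ ‖fstar r - Y‖ + ‖(s - r) • k‖ := norm_add_le _ _
      _ ≤ ‖fstar r - Y‖ + M * |s - r| := by
          rw [norm_smul, Real.norm_eq_abs]
          have := hMb k hk
          nlinarith [abs_nonneg (s - r)]
  have lip : LipschitzOnWith ⟨M, hM0⟩ (fun r => ‖fstar r - Y‖) (Set.Ici 1) := by
    apply LipschitzOnWith.of_dist_le_mul
    intro s hs r hr
    rw [Real.dist_eq, Real.dist_eq]
    have h1 := key r hr s hs
    have h2 := key s hs r hr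
    change _ ≤ M * _
    rw [abs_sub_le_iff]
    constructor
    · have : |s - r| = |r - s| := abs_sub_comm s r
      nlinarith [h1, h2]
    · nlinarith [h1, h2, abs_sub_comm s r]
  exact (lip.continuousOn).pow 2
end

section
/- Let F be a convex class of functions bounded by b in sup norm, let Y be a random variable with |Y| ≤ b a.s., let f* be the L₂-minimizer of f ↦ E(f(X) − Y)² over F, and define the excess loss L_f = (f(X) − Y)² − (f*(X) − Y)². Then there is an absolute constant C such that for every f ∈ F, E L_f² ≤ C b² E L_f. -/
open MeasureTheory

lemma integrable_of_bdd' {Ω : Type} [MeasurableSpace Ω] {μ : Measure Ω}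
    [IsProbabilityMeasure μ] {h : Ω → ℝ} {c : ℝ} (hm : Measurable h)
    (hb : ∀ ω, |h ω| ≤ c) : Integrable h μ :=
  (integrable_const c).mono' hm.aestronglyMeasurable (Filter.Eventually.of_forall hb)

theorem bernstein_condition_convex :
    ∃ C : ℝ, 0 < C ∧
      ∀ (Ω : Type) (_ : MeasurableSpace Ω) (μ : Measure Ω)
        (_ : IsProbabilityMeasure μ)
        (F : Set (Ω → ℝ)) (b : ℝ) (Y fstar : Ω → ℝ),
        0 < b → Convex ℝ F → (∀ f ∈ F, Measurable f) →
        (∀ f ∈ F, ∀ ω, |f ω| ≤ b) →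
        Measurable Y → (∀ ω, |Y ω| ≤ b) →
        fstar ∈ F →
        (∀ g ∈ F, ∫ ω, (fstar ω - Y ω) ^ 2 ∂μ ≤ ∫ ω, (g ω - Y ω) ^ 2 ∂μ) →
        ∀ f ∈ F,
          ∫ ω, ((f ω - Y ω) ^ 2 - (fstar ω - Y ω) ^ 2) ^ 2 ∂μ ≤
            C * b ^ 2 * ∫ ω, ((f ω - Y ω) ^ 2 - (fstar ω - Y ω) ^ 2) ∂μ := by
  refine ⟨16, by norm_num, ?_⟩
  intro Ω _ μ _ F b Y fstar hb hconv hmeas hbdd hYm hYb hsF hmin f hfF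
  have hfm := hmeas f hfF
  have hsm := hmeas fstar hsF
  have hfb := hbdd f hfF
  have hsb := hbdd fstar hsF
  -- basic bounds
  have hDb : ∀ ω, |f ω - fstar ω| ≤ 2 * b := by
    intro ω
    have h1 := abs_le.1 (hfb ω)
    have h2 := abs_le.1 (hsb ω)
    rw [abs_le]; constructor <;> linarith
  have hsYb : ∀ ω, |fstar ω - Y ω| ≤ 2 * b := by
    intro ω
    have h1 := abs_le.1 (hsb ω)
    have h2 := abs_le.1 (hYb ω)
    rw [abs_le]; constructor <;> linarith
  have hfYb : ∀ ω, |f ω - Y ω| ≤ 2 * b := by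
    intro ω
    have h1 := abs_le.1 (hfb ω)
    have h2 := abs_le.1 (hYb ω)
    rw [abs_le]; constructor <;> linarith
  -- integrability
  have intD2 : Integrable (fun ω => (f ω - fstar ω) ^ 2) μ := by
    refine integrable_of_bdd' ((hfm.sub hsm).pow_const 2) (c := (2 * b) ^ 2) ?_
    intro ω
    rw [abs_pow]
    exact pow_le_pow_left₀ (abs_nonneg _) (hDb ω) 2
  have intS2 : Integrable (fun ω => (fstar ω - Y ω) ^ 2) μ := by
    refine integrable_of_bdd' ((hsm.sub hYm).pow_const 2) (c := (2 * b) ^ 2) ?_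
    intro ω
    rw [abs_pow]
    exact pow_le_pow_left₀ (abs_nonneg _) (hsYb ω) 2
  have intA : Integrable (fun ω => (f ω - fstar ω) * (fstar ω - Y ω)) μ := by
    refine integrable_of_bdd' ((hfm.sub hsm).mul (hsm.sub hYm)) (c := (2 * b) * (2 * b)) ?_
    intro ω
    rw [abs_mul]
    exact mul_le_mul (hDb ω) (hsYb ω) (abs_nonneg _) (by linarith)
  have intL : Integrable (fun ω => (f ω - Y ω) ^ 2 - (fstar ω - Y ω) ^ 2) μ := by
    refine integrable_of_bdd'
      (((hfm.sub hYm).pow_const 2).sub ((hsm.sub hYm).pow_const 2)) (c := 8 * b ^ 2) ?_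
    intro ω
    have h1 : (f ω - Y ω) ^ 2 ≤ (2 * b) ^ 2 := by
      have := abs_le.1 (hfYb ω); exact sq_le_sq' (by linarith) this.2
    have h2 : (fstar ω - Y ω) ^ 2 ≤ (2 * b) ^ 2 := by
      have := abs_le.1 (hsYb ω); exact sq_le_sq' (by linarith) this.2
    rw [abs_le]
    constructor <;> nlinarith [sq_nonneg (f ω - Y ω), sq_nonneg (fstar ω - Y ω)]
  have intL2 : Integrable (fun ω => ((f ω - Y ω) ^ 2 - (fstar ω - Y ω) ^ 2) ^ 2) μ := by
    refine integrable_of_bdd'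
      ((((hfm.sub hYm).pow_const 2).sub ((hsm.sub hYm).pow_const 2)).pow_const 2)
      (c := (8 * b ^ 2) ^ 2) ?_
    intro ω
    have h1 : (f ω - Y ω) ^ 2 ≤ (2 * b) ^ 2 := by
      have := abs_le.1 (hfYb ω); exact sq_le_sq' (by linarith) this.2
    have h2 : (fstar ω - Y ω) ^ 2 ≤ (2 * b) ^ 2 := by
      have := abs_le.1 (hsYb ω); exact sq_le_sq' (by linarith) this.2
    rw [abs_pow]
    refine pow_le_pow_left₀ (abs_nonneg _) ?_ 2
    rw [abs_le]
    constructor <;> nlinarith [sq_nonneg (f ω - Y ω), sq_nonneg (fstar ω - Y ω)]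
  set A := ∫ ω, (f ω - fstar ω) * (fstar ω - Y ω) ∂μ with hAdef
  set B := ∫ ω, (f ω - fstar ω) ^ 2 ∂μ with hBdef
  have hB0 : 0 ≤ B := integral_nonneg fun ω => sq_nonneg _
  -- key convexity inequality
  have key : ∀ t : ℝ, 0 < t → t ≤ 1 → 0 ≤ 2 * t * A + t ^ 2 * B := by
    intro t ht0 ht1
    have hgF : (1 - t) • fstar + t • f ∈ F :=
      hconv hsF hfF (by linarith) ht0.le (by ring)
    have h1 := hmin _ hgF
    have heq : ∀ ω, (((1 - t) • fstar + t • f) ω - Y ω) ^ 2 =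
        (fstar ω - Y ω) ^ 2 +
          (2 * t * ((f ω - fstar ω) * (fstar ω - Y ω)) + t ^ 2 * (f ω - fstar ω) ^ 2) := by
      intro ω
      simp only [Pi.add_apply, Pi.smul_apply, smul_eq_mul]
      ring
    simp only [heq] at h1
    have hg1 : Integrable (fun ω => 2 * t * ((f ω - fstar ω) * (fstar ω - Y ω)) +
        t ^ 2 * (f ω - fstar ω) ^ 2) μ :=
      (intA.const_mul (2 * t)).add (intD2.const_mul (t ^ 2))
    rw [integral_add intS2 hg1,
      integral_add (intA.const_mul (2 * t)) (intD2.const_mul (t ^ 2)),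
      integral_const_mul, integral_const_mul] at h1
    linarith
  -- A ≥ 0
  have hA : 0 ≤ A := by
    by_contra hA'
    push_neg at hA'
    have h1 := key 1 one_pos le_rfl
    have hBpos : 0 < B := by nlinarith
    set t := min 1 (-A / B) with htdef
    have ht0 : 0 < t := lt_min one_pos (div_pos (by linarith) hBpos)
    have ht1 : t ≤ 1 := min_le_left _ _
    have hkt := key t ht0 ht1
    have htB : t * B ≤ -A := by
      have h2 : t ≤ -A / B := min_le_right _ _
      calc t * B ≤ (-A / B) * B := mul_le_mul_of_nonneg_right h2 hB0
        _ = -A := div_mul_cancel₀ _ (ne_of_gt hBpos)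
    nlinarith [mul_le_mul_of_nonneg_left htB ht0.le, mul_neg_of_pos_of_neg ht0 hA']
  -- ∫ L = B + 2A
  have hL : ∀ ω : Ω, (f ω - Y ω) ^ 2 - (fstar ω - Y ω) ^ 2 =
      (f ω - fstar ω) ^ 2 + 2 * ((f ω - fstar ω) * (fstar ω - Y ω)) := by
    intro ω; ring
  have hLeq : ∫ ω, ((f ω - Y ω) ^ 2 - (fstar ω - Y ω) ^ 2) ∂μ = B + 2 * A := by
    simp only [hL]
    rw [integral_add intD2 (intA.const_mul 2), integral_const_mul]
  -- pointwise bound on L²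
  have hptw : ∀ ω, ((f ω - Y ω) ^ 2 - (fstar ω - Y ω) ^ 2) ^ 2 ≤
      16 * b ^ 2 * (f ω - fstar ω) ^ 2 := by
    intro ω
    have h2 : |f ω + fstar ω - 2 * Y ω| ≤ 4 * b := by
      have ha := abs_le.1 (hfb ω)
      have hc := abs_le.1 (hsb ω)
      have hd := abs_le.1 (hYb ω)
      rw [abs_le]; constructor <;> linarith
    have h3 : (f ω + fstar ω - 2 * Y ω) ^ 2 ≤ (4 * b) ^ 2 := by
      have := abs_le.1 h2; exact sq_le_sq' (by linarith) this.2
    have h1 : ((f ω - Y ω) ^ 2 - (fstar ω - Y ω) ^ 2) ^ 2 =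
        (f ω - fstar ω) ^ 2 * (f ω + fstar ω - 2 * Y ω) ^ 2 := by ring
    rw [h1]
    calc (f ω - fstar ω) ^ 2 * (f ω + fstar ω - 2 * Y ω) ^ 2
        ≤ (f ω - fstar ω) ^ 2 * (4 * b) ^ 2 :=
          mul_le_mul_of_nonneg_left h3 (sq_nonneg _)
      _ = 16 * b ^ 2 * (f ω - fstar ω) ^ 2 := by ring
  have hC : ∫ ω, ((f ω - Y ω) ^ 2 - (fstar ω - Y ω) ^ 2) ^ 2 ∂μ ≤ 16 * b ^ 2 * B := by
    calc ∫ ω, ((f ω - Y ω) ^ 2 - (fstar ω - Y ω) ^ 2) ^ 2 ∂μ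
        ≤ ∫ ω, 16 * b ^ 2 * (f ω - fstar ω) ^ 2 ∂μ :=
          integral_mono intL2 (intD2.const_mul _) hptw
      _ = 16 * b ^ 2 * B := integral_const_mul _ _
  rw [hLeq]
  nlinarith [sq_nonneg b]
end

section
/- Let ρ : [1,∞) × (0,∞) → (0,∞) be continuous and increasing in both arguments, and let P ℓ(f_r*) be a nonincreasing nonnegative continuous function of r. Define recursively r₁ = 1 and, for i ≥ 2, r_i to be the largest number satisfying both r_i ≤ 2 r_{i−1} and P ℓ(f_{r_{i−1}}*) − P ℓ(f_{r_i}*) ≤ ρ(r_i, u_i) with u_i = u + ln(π²/6) + 2 ln i, where at each step either r_i = 2r_{i−1} or equality holds in the second constraint. Then for all i ≥ 1, i ≤ P ℓ(f_{r_1}*)/ρ(r_1, u_1) + log₂(2 r_i); in particular r_i → ∞ as i → ∞. -/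
open Real Filter

theorem radius_counting_lemma (ρ : ℝ → ℝ → ℝ)
    (hρc : Continuous fun q : ℝ × ℝ => ρ q.1 q.2)
    (hρpos : ∀ r x, 1 ≤ r → 0 < x → 0 < ρ r x)
    (hρr : ∀ x, Monotone fun r => ρ r x)
    (hρu : ∀ r, Monotone (ρ r))
    (ℓ : ℝ → ℝ) (hℓmono : AntitoneOn ℓ (Set.Ici 1))
    (hℓ0 : ∀ r, 1 ≤ r → 0 ≤ ℓ r) (hℓc : ContinuousOn ℓ (Set.Ici 1))
    (u : ℝ) (hu : 0 < u)
    (r : ℕ → ℝ) (hr1 : r 1 = 1)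
    (hmono : ∀ i, 2 ≤ i → r (i - 1) ≤ r i)
    (hrec : ∀ i, 2 ≤ i →
      r i ≤ 2 * r (i - 1) ∧
      ℓ (r (i - 1)) - ℓ (r i) ≤ ρ (r i) (u + Real.log (π ^ 2 / 6) + 2 * Real.log i) ∧
      (r i = 2 * r (i - 1) ∨
        ℓ (r (i - 1)) - ℓ (r i) = ρ (r i) (u + Real.log (π ^ 2 / 6) + 2 * Real.log i))) :
    (∀ i : ℕ, 1 ≤ i →
      (i : ℝ) ≤ ℓ (r 1) / ρ (r 1) (u + Real.log (π ^ 2 / 6) + 2 * Real.log 1) +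
        Real.logb 2 (2 * r i)) ∧
    Tendsto (fun i => r i) atTop atTop := by
  set D : ℝ := u + Real.log (π ^ 2 / 6) + 2 * Real.log 1 with hD
  have hpi : (3:ℝ) < π := Real.pi_gt_three
  have hlogpi : 0 < Real.log (π ^ 2 / 6) := Real.log_pos (by nlinarith)
  have hDpos : 0 < D := by
    rw [hD, Real.log_one]; linarith
  -- r i ≥ 1 for i ≥ 1
  have hrmono' : ∀ i : ℕ, 1 ≤ i → r i ≤ r (i + 1) := by
    intro i hi
    have := hmono (i + 1) (by omega)
    simpa using this
  have hr_ge1 : ∀ i : ℕ, 1 ≤ i → 1 ≤ r i := by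
    intro i hi
    induction i, hi using Nat.le_induction with
    | base => rw [hr1]
    | succ n hn ih => exact le_trans ih (hrmono' n hn)
  have hρ1pos : 0 < ρ (r 1) D := hρpos _ _ (by rw [hr1]) hDpos
  -- lower bound on ρ at later steps
  have hρlb : ∀ i : ℕ, 1 ≤ i →
      ρ (r 1) D ≤ ρ (r (i + 1)) (u + Real.log (π ^ 2 / 6) + 2 * Real.log (i + 1)) := by
    intro i hi
    calc ρ (r 1) D ≤ ρ (r (i + 1)) D := hρr D (by rw [hr1]; exact hr_ge1 _ (by omega))
      _ ≤ _ := by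
          apply hρu
          rw [hD, Real.log_one]
          have hc : (0:ℝ) ≤ (i:ℝ) := Nat.cast_nonneg i
          have : (0:ℝ) ≤ Real.log (i + 1) := Real.log_nonneg (by linarith)
          linarith
  -- key inductive bound
  have key : ∀ i : ℕ, 1 ≤ i →
      (i : ℝ) ≤ (ℓ (r 1) - ℓ (r i)) / ρ (r 1) D + Real.logb 2 (2 * r i) := by
    intro i hi
    induction i, hi using Nat.le_induction with
    | base =>
        rw [hr1]
        norm_num [Real.logb_self_eq_one]
    | succ n hn ih =>
        have h2 : 2 ≤ n + 1 := by omega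
        have hrec' := hrec (n + 1) h2
        simp only [Nat.add_sub_cancel] at hrec'
        have hrn : 1 ≤ r n := hr_ge1 n hn
        have hrn1 : 1 ≤ r (n + 1) := hr_ge1 (n + 1) (by omega)
        have hle : r n ≤ r (n + 1) := hrmono' n hn
        have hℓle : ℓ (r (n + 1)) ≤ ℓ (r n) := hℓmono hrn hrn1 hle
        rcases hrec'.2.2 with hdbl | hdrop
        · -- doubling step
          have hlogb : Real.logb 2 (2 * r (n + 1)) = 1 + Real.logb 2 (2 * r n) := by
            rw [hdbl, show (2:ℝ) * (2 * r n) = 2 * (2 * r n) by ring,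
              Real.logb_mul (by norm_num) (by positivity)]
            norm_num [Real.logb_self_eq_one]
          have hdiv : (ℓ (r 1) - ℓ (r n)) / ρ (r 1) D ≤ (ℓ (r 1) - ℓ (r (n + 1))) / ρ (r 1) D :=
            div_le_div_of_nonneg_right (by linarith) hρ1pos.le
          push_cast
          linarith
        · -- loss-drop step
          have hρ : ρ (r 1) D ≤ ℓ (r n) - ℓ (r (n + 1)) := by
            rw [hdrop]
            have h := hρlb n hn
            push_cast at h ⊢
            exact h
          have hdiv : (ℓ (r 1) - ℓ (r n)) / ρ (r 1) D + 1 ≤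
              (ℓ (r 1) - ℓ (r (n + 1))) / ρ (r 1) D := by
            rw [div_add' _ _ _ (ne_of_gt hρ1pos)]
            gcongr
            linarith
          have hlogb : Real.logb 2 (2 * r n) ≤ Real.logb 2 (2 * r (n + 1)) := by
            exact Real.logb_le_logb_of_le one_lt_two (by linarith) (by linarith)
          push_cast
          linarith
  have main : ∀ i : ℕ, 1 ≤ i →
      (i : ℝ) ≤ ℓ (r 1) / ρ (r 1) D + Real.logb 2 (2 * r i) := by
    intro i hi
    have h1 := key i hi
    have hli : 0 ≤ ℓ (r i) := hℓ0 _ (hr_ge1 i hi)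
    have h2 : (ℓ (r 1) - ℓ (r i)) / ρ (r 1) D ≤ ℓ (r 1) / ρ (r 1) D :=
      div_le_div_of_nonneg_right (by linarith) hρ1pos.le
    linarith
  refine ⟨main, ?_⟩
  -- tendsto
  rw [tendsto_atTop]
  intro M
  set C : ℝ := ℓ (r 1) / ρ (r 1) D with hC
  set M' : ℝ := max M 1 with hM'
  refine Filter.eventually_atTop.2 ⟨⌈C + Real.logb 2 (2 * M')⌉₊ + 1, fun i hi => ?_⟩
  by_contra hcon
  push_neg at hcon
  have hi1 : 1 ≤ i := by omega
  have hri : r i < M' := lt_of_lt_of_le hcon (le_max_left _ _)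
  have hM'1 : (1:ℝ) ≤ M' := le_max_right _ _
  have hri1 : 1 ≤ r i := hr_ge1 i hi1
  have hlogb : Real.logb 2 (2 * r i) ≤ Real.logb 2 (2 * M') :=
    Real.logb_le_logb_of_le one_lt_two (by linarith) (by linarith)
  have hub := main i hi1
  have hceil : C + Real.logb 2 (2 * M') ≤ (⌈C + Real.logb 2 (2 * M')⌉₊ : ℝ) := Nat.le_ceil _
  have : (i : ℝ) ≥ (⌈C + Real.logb 2 (2 * M')⌉₊ : ℝ) + 1 := by exact_mod_cast hi
  linarith
end
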